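/- Let n ∈ ℕ and let M be an n×n complex matrix with Mᵀ = M, M·M = (trace M)·M and trace M ≠ 0. Then there exists a vector v : Fin n → ℂ with M = vecMulVec v v. -/

import Mathlib

open Matrix

theorem stmt_3 (n : ℕ) (M : Matrix (Fin n) (Fin n) ℂ) (hsym : Mᵀ = M)
    (hM : M * M = M.trace • M) (htr : M.trace ≠ 0) :
    ∃ v : Fin n → ℂ, M = vecMulVec v v := by
  set t := M.trace with ht
  set P : Matrix (Fin n) (Fin n) ℂ := t⁻¹ • M with hPdef
  have hPP : P * P = P := by
    rw [hPdef, smul_mul_smul_comm, hM, smul_smul]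
    congr 1
    field_simp
  have hPtr : P.trace = 1 := by
    rw [hPdef, trace_smul, smul_eq_mul, inv_mul_cancel₀ htr]
  set f := Matrix.toLin' P with hf
  have hff : f ∘ₗ f = f := by
    rw [hf, ← Matrix.toLin'_mul, hPP]
  obtain ⟨p, hp⟩ := (LinearMap.isProj_iff_isIdempotentElem f).2 hff
  have htrf : LinearMap.trace ℂ (Fin n → ℂ) f = (Module.finrank ℂ p : ℂ) := hp.trace
  have htrf' : LinearMap.trace ℂ (Fin n → ℂ) f = 1 := by
    rw [LinearMap.trace_eq_matrix_trace ℂ (Pi.basisFun ℂ (Fin n)),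
      LinearMap.toMatrix_eq_toMatrix', hf, LinearMap.toMatrix'_toLin', hPtr]
  have hrank : Module.finrank ℂ p = 1 := by
    have := htrf.symm.trans htrf'
    exact_mod_cast this
  obtain ⟨u, -, hu⟩ := (finrank_eq_one_iff' ).1 hrank
  -- columns of P lie in p and hence are multiples of u
  have hcol : ∀ j, ∃ c : ℂ, ∀ i, P i j = c * (u : Fin n → ℂ) i := by
    intro j
    have hmem : (fun i => P i j) ∈ p := by
      have := hp.map_mem (Pi.single j 1)
      have he : f (Pi.single j 1) = fun i => P i j := by
        ext i
        simp [hf, Matrix.toLin'_apply, Matrix.mulVec_single]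
      rwa [he] at this
    obtain ⟨c, hc⟩ := hu ⟨_, hmem⟩
    refine ⟨c, fun i => ?_⟩
    have h2 := congrFun (congrArg Subtype.val hc) i
    simpa using h2.symm
  choose w hw using hcol
  set v : Fin n → ℂ := fun i => (u : Fin n → ℂ) i with hv
  -- P i j = w j * v i
  have hPsym : ∀ i j, P i j = P j i := by
    intro i j
    have := congrFun (congrFun hsym i) j
    simp only [transpose_apply] at this
    simp [hPdef, Matrix.smul_apply, this, smul_eq_mul]
  have htr1 : ∑ k, w k * v k = 1 := by
    have : P.trace = ∑ k, w k * v k := by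
      simp [Matrix.trace, Matrix.diag]
      exact Finset.sum_congr rfl fun k _ => hw k k
    rw [← this, hPtr]
  obtain ⟨k, hk⟩ : ∃ k, w k * v k ≠ 0 := by
    by_contra h
    push_neg at h
    rw [Finset.sum_eq_zero (fun k _ => h k)] at htr1
    exact one_ne_zero htr1.symm
  have hvk : v k ≠ 0 := fun h => hk (by simp [h])
  have hwk : w k ≠ 0 := fun h => hk (by simp [h])
  -- from symmetry : w i = (w k / v k) * v i
  have hwi : ∀ i, w i = (w k / v k) * v i := by
    intro i
    have h1 : w k * v i = w i * v k := by
      have h2 := hPsym i k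
      rw [hw k i, hw i k] at h2
      simpa [hv, mul_comm] using h2
    rw [div_mul_eq_mul_div, eq_div_iff hvk]
    linear_combination -h1
  -- M = (t * (w k / v k)) • vecMulVec v v
  obtain ⟨s, hs⟩ := IsAlgClosed.exists_pow_nat_eq (t * (w k / v k)) (n := 2) (by norm_num)
  refine ⟨fun i => s * v i, ?_⟩
  ext i j
  have hMij : M i j = t * P i j := by
    rw [hPdef]
    simp [Matrix.smul_apply, smul_eq_mul]
    field_simp
  rw [hMij, hw j i, hwi j]
  simp only [vecMulVec_apply, hv] at hs ⊢
  linear_combination (-((u : Fin n → ℂ) j * (u : Fin n → ℂ) i)) * hs
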